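/- Let 𝔄 be a transitive structure of depth d, breadth b, and width c (all finite), and let w be a world of 𝔄. Then the substructure generated by {w} contains at most n worlds, where n = c if b = 0, n = c·(d+1) if b = 1, and n = c·(b^{d+1} − 1)/(b − 1) if b ≥ 2. -/

import Mathlib

/-- The R-clique of `w`: `w` together with all worlds R-equivalent to `w`. -/
def Clique {W : Type} (R : W → W → Prop) (w : W) : Set W :=
  {v | v = w ∨ (R w v ∧ R v w)}

/-- `w₂` is a strict R-successor of `w₁`. -/
def StrictSucc {W : Type} (R : W → W → Prop) (w₁ w₂ : W) : Prop :=
  R w₁ w₂ ∧ ¬ R w₂ w₁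

/-- `w₂` is a direct R-successor of `w₁`. -/
def DirectSucc {W : Type} (R : W → W → Prop) (w₁ w₂ : W) : Prop :=
  StrictSucc R w₁ w₂ ∧
    ∀ w, R w₁ w → R w w₂ → w ∈ Clique R w₁ ∨ w ∈ Clique R w₂

namespace Stmt11Aux

variable {W : Type} (R : W → W → Prop)

/-- The set of worlds reachable from `w`. -/
def Reach (w : W) : Set W := {v | Relation.ReflTransGen R w v}

/-- `ws` is a chain of strict successors of length `m`. -/
def IsChain (m : ℕ) (ws : Fin (m + 1) → W) : Prop :=
  ∀ i : Fin m, StrictSucc R (ws i.castSucc) (ws i.succ)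

/-- All strict chains starting at `w` have length at most `k`. -/
def ChainBound (w : W) (k : ℕ) : Prop :=
  ∀ m (ws : Fin (m + 1) → W), IsChain R m ws → ws 0 = w → m ≤ k

variable {R}

lemma reach_iff (hTr : Transitive R) {w v : W} :
    v ∈ Reach R w ↔ v = w ∨ R w v := by
  constructor
  · intro h
    induction h with
    | refl => exact Or.inl rfl
    | tail _ h₂ ih =>
      rcases ih with rfl | h
      · exact Or.inr h₂
      · exact Or.inr (hTr h h₂)
  · rintro (rfl | h)
    · exact Relation.ReflTransGen.refl
    · exact Relation.ReflTransGen.single h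

lemma mem_clique_self (w : W) : w ∈ Clique R w := Or.inl rfl

lemma clique_symm {u v : W} (h : v ∈ Clique R u) : u ∈ Clique R v := by
  rcases h with rfl | ⟨h1, h2⟩
  · exact Or.inl rfl
  · exact Or.inr ⟨h2, h1⟩

lemma clique_trans (hTr : Transitive R) {u v z : W}
    (h1 : v ∈ Clique R u) (h2 : z ∈ Clique R v) : z ∈ Clique R u := by
  rcases h1 with rfl | ⟨a1, a2⟩
  · exact h2
  · rcases h2 with rfl | ⟨b1, b2⟩
    · exact Or.inr ⟨a1, a2⟩
    · exact Or.inr ⟨hTr a1 b1, hTr b2 a2⟩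

lemma clique_eq (hTr : Transitive R) {u v : W} (h : v ∈ Clique R u) :
    Clique R u = Clique R v := by
  ext x
  constructor
  · intro hx
    exact clique_trans hTr (clique_symm h) hx
  · intro hx
    exact clique_trans hTr h hx

lemma clique_eq_or_disjoint (hTr : Transitive R) (u u' : W) :
    Clique R u = Clique R u' ∨ Disjoint (Clique R u) (Clique R u') := by
  by_cases h : Disjoint (Clique R u) (Clique R u')
  · exact Or.inr h
  · left
    obtain ⟨z, hz, hz'⟩ := Set.not_disjoint_iff.mp h
    have : u' ∈ Clique R u := clique_trans hTr hz (clique_symm hz')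
    exact clique_eq hTr this

lemma reach_congr (hTr : Transitive R) {u u' : W} (h : u' ∈ Clique R u) :
    Reach R u = Reach R u' := by
  ext v
  rw [reach_iff hTr, reach_iff hTr]
  rcases h with rfl | ⟨h1, h2⟩
  · rfl
  · constructor
    · rintro (rfl | hv)
      · exact Or.inr h2
      · exact Or.inr (hTr h2 hv)
    · rintro (rfl | hv)
      · exact Or.inr h1
      · exact Or.inr (hTr h1 hv)

lemma chain_cons {m : ℕ} {ws : Fin (m + 1) → W} (h : IsChain R m ws) {y : W}
    (hy : StrictSucc R y (ws 0)) :
    ∃ ws' : Fin (m + 2) → W, IsChain R (m + 1) ws' ∧ ws' 0 = y := by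
  refine ⟨Fin.cases y ws, ?_, by simp⟩
  intro i
  induction i using Fin.cases with
  | zero =>
    exact hy
  | succ j =>
    have e1 : (Fin.succ j).castSucc = (j.castSucc).succ := (Fin.succ_castSucc j).symm
    rw [e1]
    simpa using h j

lemma exists_direct (hTr : Transitive R) {d : ℕ}
    (hdepth : ∀ k, ∀ ws : Fin (k + 1) → W,
      (∀ i : Fin k, StrictSucc R (ws i.castSucc) (ws i.succ)) → k ≤ d)
    {w v : W} (hsv : StrictSucc R w v) :
    ∃ u, DirectSucc R w u ∧ (u = v ∨ R u v) := by
  set M : Set ℕ := {m | ∃ z, StrictSucc R w z ∧ (z = v ∨ R z v) ∧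
    ∃ ws : Fin (m + 1) → W, IsChain R m ws ∧ ws 0 = z} with hM
  have hne : 0 ∈ M := ⟨v, hsv, Or.inl rfl, fun _ => v, fun i => i.elim0, rfl⟩
  have hbdd : BddAbove M := by
    refine ⟨d, fun m hm => ?_⟩
    obtain ⟨z, _, _, ws, hc, _⟩ := hm
    exact hdepth m ws hc
  obtain ⟨z, hz, hzv, ws, hc, hws0⟩ := Nat.sSup_mem ⟨0, hne⟩ hbdd
  have hmax : ∀ n ∈ M, n ≤ sSup M := fun n hn => le_csSup hbdd hn
  refine ⟨z, ⟨hz, ?_⟩, hzv⟩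
  intro y hwy hyz
  by_contra hy
  push_neg at hy
  obtain ⟨hy1, hy2⟩ := hy
  have hyw : ¬ R y w := fun h => hy1 (Or.inr ⟨hwy, h⟩)
  have hzy : ¬ R z y := fun h => hy2 (Or.inr ⟨h, hyz⟩)
  have hyv : y = v ∨ R y v := by
    rcases hzv with rfl | h
    · exact Or.inr hyz
    · exact Or.inr (hTr hyz h)
  obtain ⟨ws', hc', h0'⟩ := chain_cons hc (y := y) (by rw [hws0]; exact ⟨hyz, hzy⟩)
  have hmem : sSup M + 1 ∈ M := ⟨y, ⟨hwy, hyw⟩, hyv, ws', hc', h0'⟩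
  have := hmax _ hmem
  omega

lemma decomp (hTr : Transitive R) {d : ℕ}
    (hdepth : ∀ k, ∀ ws : Fin (k + 1) → W,
      (∀ i : Fin k, StrictSucc R (ws i.castSucc) (ws i.succ)) → k ≤ d)
    {w v : W} (hv : v ∈ Reach R w) :
    v ∈ Clique R w ∨ ∃ u, DirectSucc R w u ∧ v ∈ Reach R u := by
  rcases (reach_iff hTr).mp hv with rfl | hwv
  · exact Or.inl (mem_clique_self v)
  · by_cases hvw : R v w
    · exact Or.inl (Or.inr ⟨hwv, hvw⟩)
    · obtain ⟨u, hu, huv⟩ := exists_direct hTr hdepth ⟨hwv, hvw⟩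
      refine Or.inr ⟨u, hu, ?_⟩
      rw [reach_iff hTr]
      rcases huv with rfl | h
      · exact Or.inl rfl
      · exact Or.inr h

lemma biUnion_bound {ι : Type} (t : Finset ι) (f : ι → Set W) (n : ℕ)
    (hf : ∀ i ∈ t, (f i).Finite ∧ (f i).ncard ≤ n) :
    (⋃ i ∈ t, f i).Finite ∧ (⋃ i ∈ t, f i).ncard ≤ t.card * n := by
  classical
  induction t using Finset.induction_on with
  | empty => simp
  | @insert a s ha ih =>
    have hfa := hf a (Finset.mem_insert_self a s)
    obtain ⟨ihf, ihc⟩ := ih (fun i hi => hf i (Finset.mem_insert_of_mem hi))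
    have he : (⋃ i ∈ insert a s, f i) = f a ∪ ⋃ i ∈ s, f i := by
      simp [Set.biUnion_insert]
    constructor
    · rw [he]; exact hfa.1.union ihf
    · rw [he, Finset.card_insert_of_notMem ha]
      calc (f a ∪ ⋃ i ∈ s, f i).ncard ≤ (f a).ncard + (⋃ i ∈ s, f i).ncard :=
            Set.ncard_union_le _ _
        _ ≤ n + s.card * n := Nat.add_le_add hfa.2 ihc
        _ = (s.card + 1) * n := by ring

lemma main (hTr : Transitive R) {d b c : ℕ}
    (hdepth : ∀ k, ∀ ws : Fin (k + 1) → W,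
      (∀ i : Fin k, StrictSucc R (ws i.castSucc) (ws i.succ)) → k ≤ d)
    (hbreadth : ∀ k (w : W) (ws : Fin k → W),
      (∀ i, DirectSucc R w (ws i)) →
      (∀ i j, i ≠ j → Disjoint (Clique R (ws i)) (Clique R (ws j))) → k ≤ b)
    (hwidth : ∀ w, (Clique R w).Finite ∧ (Clique R w).ncard ≤ c) :
    ∀ k (w : W), ChainBound R w k →
      (Reach R w).Finite ∧
        (Reach R w).ncard ≤ c * ∑ i ∈ Finset.range (k + 1), b ^ i := by
  classical
  intro k
  induction k with
  | zero =>
    intro w hcb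
    have hsub : Reach R w ⊆ Clique R w := by
      intro v hv
      rcases (reach_iff hTr).mp hv with rfl | hwv
      · exact mem_clique_self v
      · by_cases hvw : R v w
        · exact Or.inr ⟨hwv, hvw⟩
        · exfalso
          have hch : IsChain R 1 ![w, v] := by
            intro i
            fin_cases i
            exact ⟨hwv, hvw⟩
          have := hcb 1 ![w, v] hch rfl
          omega
    refine ⟨(hwidth w).1.subset hsub, ?_⟩
    have := Set.ncard_le_ncard hsub (hwidth w).1
    simpa using this.trans (hwidth w).2
  | succ k ih =>
    intro w hcb
    set F : Set (Set W) := Clique R '' {u | DirectSucc R w u} with hF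
    set rep : Set W → W := fun s =>
      if h : ∃ u, DirectSucc R w u ∧ Clique R u = s then h.choose else w with hrepdef
    have hrep : ∀ s ∈ F, DirectSucc R w (rep s) ∧ Clique R (rep s) = s := by
      intro s hs
      obtain ⟨u, hu, hus⟩ := hs
      have hex : ∃ u, DirectSucc R w u ∧ Clique R u = s := ⟨u, hu, hus⟩
      simp only [hrepdef, dif_pos hex]
      exact hex.choose_spec
    have hcard : ∀ t : Finset (Set W), ↑t ⊆ F → t.card ≤ b := by
      intro t ht
      refine hbreadth t.card w (fun i => rep ((t.equivFin.symm i : t) : Set W))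
        (fun i => (hrep _ (ht (t.equivFin.symm i).2)).1) ?_
      intro i j hij
      have h1 := (hrep _ (ht (t.equivFin.symm i).2)).2
      have h2 := (hrep _ (ht (t.equivFin.symm j).2)).2
      have hne : ((t.equivFin.symm i : t) : Set W) ≠ ((t.equivFin.symm j : t) : Set W) := by
        intro h
        exact hij (t.equivFin.symm.injective (Subtype.ext h))
      rcases clique_eq_or_disjoint hTr (rep ((t.equivFin.symm i : t) : Set W))
          (rep ((t.equivFin.symm j : t) : Set W)) with heq | hd
      · exact absurd (h1 ▸ h2 ▸ heq) hne
      · exact hd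
    have hFfin : F.Finite := by
      by_contra hinf
      obtain ⟨t, hts, htc⟩ := Set.Infinite.exists_subset_card_eq hinf (b + 1)
      have := hcard t hts
      omega
    have hFcard : hFfin.toFinset.card ≤ b := hcard _ (by simp)
    -- each representative has chain bound k
    have hrcb : ∀ s ∈ hFfin.toFinset, ChainBound R (rep s) k := by
      intro s hs
      have hds : DirectSucc R w (rep s) := (hrep s (hFfin.mem_toFinset.mp hs)).1
      intro m ws hc hws0
      obtain ⟨ws', hc', h0'⟩ := chain_cons hc (y := w) (by rw [hws0]; exact hds.1)
      have := hcb (m + 1) ws' hc' h0'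
      omega
    -- decomposition of Reach
    have hsub : Reach R w ⊆ Clique R w ∪ ⋃ s ∈ hFfin.toFinset, Reach R (rep s) := by
      intro v hv
      rcases decomp hTr hdepth hv with h | ⟨u, hu, hvu⟩
      · exact Or.inl h
      · right
        have hsF : Clique R u ∈ F := ⟨u, hu, rfl⟩
        have hr := hrep _ hsF
        have hmem : rep (Clique R u) ∈ Clique R u := by
          have h := mem_clique_self (R := R) (rep (Clique R u))
          rwa [hr.2] at h
        have : Reach R u = Reach R (rep (Clique R u)) := reach_congr hTr hmem
        refine Set.mem_biUnion (hFfin.mem_toFinset.mpr hsF) ?_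
        rw [← this]
        exact hvu
    obtain ⟨hUfin, hUcard⟩ := biUnion_bound hFfin.toFinset (fun s => Reach R (rep s))
      (c * ∑ i ∈ Finset.range (k + 1), b ^ i)
      (fun s hs => ih (rep s) (hrcb s hs))
    have hfin : (Reach R w).Finite := ((hwidth w).1.union hUfin).subset hsub
    refine ⟨hfin, ?_⟩
    have hle := Set.ncard_le_ncard hsub ((hwidth w).1.union hUfin)
    have hle2 : (Reach R w).ncard ≤
        c + hFfin.toFinset.card * (c * ∑ i ∈ Finset.range (k + 1), b ^ i) :=
      hle.trans ((Set.ncard_union_le _ _).trans (Nat.add_le_add (hwidth w).2 hUcard))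
    have hle3 : (Reach R w).ncard ≤ c + b * (c * ∑ i ∈ Finset.range (k + 1), b ^ i) :=
      hle2.trans (Nat.add_le_add_left (Nat.mul_le_mul_right _ hFcard) c)
    have hgeom : (∑ i ∈ Finset.range (k + 2), b ^ i) =
        1 + b * ∑ i ∈ Finset.range (k + 1), b ^ i := by
      rw [Finset.sum_range_succ' (fun i => b ^ i) (k + 1), Finset.mul_sum]
      simp [pow_succ, mul_comm, add_comm]
    calc (Reach R w).ncard ≤ c + b * (c * ∑ i ∈ Finset.range (k + 1), b ^ i) := hle3
      _ = c * (1 + b * ∑ i ∈ Finset.range (k + 1), b ^ i) := by ring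
      _ = c * ∑ i ∈ Finset.range (k + 2), b ^ i := by rw [hgeom]

lemma geom_zero : ∀ n : ℕ, (∑ i ∈ Finset.range (n + 1), (0 : ℕ) ^ i) = 1 := by
  intro n
  induction n with
  | zero => simp
  | succ n ih => rw [Finset.sum_range_succ, ih]; simp

lemma geom_mul {b : ℕ} (hb : 2 ≤ b) :
    ∀ n : ℕ, (b - 1) * ∑ i ∈ Finset.range (n + 1), b ^ i = b ^ (n + 1) - 1 := by
  intro n
  induction n with
  | zero => simp
  | succ n ih =>
    rw [Finset.sum_range_succ, Nat.mul_add, ih]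
    have h1 : 1 ≤ b ^ (n + 1) := Nat.one_le_pow _ _ (by omega)
    have h2 : b ^ (n + 1 + 1) = b * b ^ (n + 1) := by ring
    have h3 : (b - 1) * b ^ (n + 1) = b * b ^ (n + 1) - b ^ (n + 1) := by
      rw [Nat.sub_mul, one_mul]
    have h4 : b ^ (n + 1) ≤ b * b ^ (n + 1) := Nat.le_mul_of_pos_left _ (by omega)
    omega

end Stmt11Aux

theorem stmt11 {W : Type} (R : W → W → Prop) (hTr : Transitive R)
    (V : ℕ → W → Prop) (d b c : ℕ)
    (hdepth : ∀ k, ∀ ws : Fin (k + 1) → W,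
      (∀ i : Fin k, StrictSucc R (ws i.castSucc) (ws i.succ)) → k ≤ d)
    (hbreadth : ∀ k (w : W) (ws : Fin k → W),
      (∀ i, DirectSucc R w (ws i)) →
      (∀ i j, i ≠ j → Disjoint (Clique R (ws i)) (Clique R (ws j))) → k ≤ b)
    (hwidth : ∀ w, (Clique R w).Finite ∧ (Clique R w).ncard ≤ c)
    (w : W) :
    {v | Relation.ReflTransGen R w v}.Finite ∧
    {v | Relation.ReflTransGen R w v}.ncard ≤
      (if b = 0 then c
       else if b = 1 then c * (d + 1)
       else c * (b ^ (d + 1) - 1) / (b - 1)) := by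
  have hcb : Stmt11Aux.ChainBound R w d := fun m ws hc _ => hdepth m ws hc
  obtain ⟨hfin, hcard⟩ := Stmt11Aux.main hTr hdepth hbreadth hwidth d w hcb
  refine ⟨hfin, ?_⟩
  by_cases hb0 : b = 0
  · subst hb0
    simp only [if_pos rfl]
    rw [Stmt11Aux.geom_zero d] at hcard
    simpa [Stmt11Aux.Reach] using hcard
  · by_cases hb1 : b = 1
    · subst hb1
      simp only [hb0, if_neg, if_pos rfl]
      simp only [one_pow, Finset.sum_const, Finset.card_range, smul_eq_mul, mul_one] at hcard
      exact hcard
    · rw [if_neg hb0, if_neg hb1]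
      have hb2 : 2 ≤ b := by omega
      have key := Stmt11Aux.geom_mul hb2 d
      have : c * (b ^ (d + 1) - 1) / (b - 1) =
          c * ∑ i ∈ Finset.range (d + 1), b ^ i := by
        rw [← key, ← Nat.mul_assoc, Nat.mul_comm c (b - 1), Nat.mul_assoc,
          Nat.mul_div_cancel_left _ (by omega : 0 < b - 1)]
      rw [this]
      exact hcard
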